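/- Let M be an n×n Hermitian positive-definite complex matrix and let A ⊆ {1,…,n} be nonempty. For S ⊆ {1,…,n} let K(M,S) = {v ∈ ℂⁿ : v_j = 0 for all j ∉ S, and (M·v)_i = 0 for all i ∉ S}. Then there exists an extensively local reduced observable for M on A — i.e. an n×n matrix o supported on A×A with M·o = oᴴ·M such that for every i ∈ A there is j ∈ A with o_{ij} ≠ 0 or o_{ji} ≠ 0 — if and only if dim K(M,A) > dim K(M,S) for every proper subset S ⊊ A. -/

import Mathlib

open scoped ComplexOrder Matrix

/-- The kernel of the off-diagonal block `M^{A'A}`: vectors supported on `A` whose image under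
`M` is also supported on `A`. -/
noncomputable def Kspace {n : ℕ} (M : Matrix (Fin n) (Fin n) ℂ) (A : Set (Fin n)) :
    Submodule ℂ (Fin n → ℂ) where
  carrier := {v | (∀ j ∉ A, v j = 0) ∧ ∀ i ∉ A, M.mulVec v i = 0}
  add_mem' := by
    rintro v w ⟨hv1, hv2⟩ ⟨hw1, hw2⟩
    refine ⟨fun j hj => ?_, fun i hi => ?_⟩
    · simp [hv1 j hj, hw1 j hj]
    · simp [Matrix.mulVec_add, hv2 i hi, hw2 i hi]
  zero_mem' := by
    refine ⟨fun j _ => rfl, fun i _ => ?_⟩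
    simp [Matrix.mulVec_zero]
  smul_mem' := by
    rintro c v ⟨hv1, hv2⟩
    refine ⟨fun j hj => ?_, fun i hi => ?_⟩
    · simp [hv1 j hj]
    · simp [Matrix.mulVec_smul, hv2 i hi]

lemma mem_Kspace {n : ℕ} {M : Matrix (Fin n) (Fin n) ℂ} {A : Set (Fin n)} {v : Fin n → ℂ} :
    v ∈ Kspace M A ↔ (∀ j ∉ A, v j = 0) ∧ ∀ i ∉ A, M.mulVec v i = 0 := Iff.rfl

lemma Kspace_mono {n : ℕ} (M : Matrix (Fin n) (Fin n) ℂ) {S T : Set (Fin n)} (h : S ⊆ T) :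
    Kspace M S ≤ Kspace M T := by
  intro v hv
  rw [mem_Kspace] at hv ⊢
  exact ⟨fun j hj => hv.1 j fun hS => hj (h hS), fun i hi => hv.2 i fun hS => hi (h hS)⟩

theorem stmt_16 (n : ℕ) (M : Matrix (Fin n) (Fin n) ℂ) (hM : M.PosDef)
    (A : Set (Fin n)) (hA : A.Nonempty) :
    (∃ o : Matrix (Fin n) (Fin n) ℂ,
      (∀ i j, (i ∉ A ∨ j ∉ A) → o i j = 0) ∧ M * o = oᴴ * M ∧
      ∀ i ∈ A, ∃ j ∈ A, o i j ≠ 0 ∨ o j i ≠ 0) ↔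
    ∀ S : Set (Fin n), S ⊂ A →
      Module.finrank ℂ (Kspace M S) < Module.finrank ℂ (Kspace M A) := by
  have hent : ∀ a b, star (M a b) = M b a := fun a b => hM.1.apply b a
  have hinj : ∀ v : Fin n → ℂ, v ≠ 0 → M.mulVec v ≠ 0 := by
    intro v hv h0
    have := hM.dotProduct_mulVec_pos hv
    rw [h0, dotProduct_zero] at this
    exact lt_irrefl _ this
  constructor
  · rintro ⟨o, hsupp, hcomm, hext⟩ S hSA
    have hMcol : ∀ k, M.mulVec (fun r => o r k) = fun r => (M * o) r k := by
      intro k; funext r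
      simp [Matrix.mulVec, dotProduct, Matrix.mul_apply]
    have hcolK : ∀ k, (fun r => o r k) ∈ Kspace M A := by
      intro k
      rw [mem_Kspace]
      refine ⟨fun r hr => hsupp r k (Or.inl hr), fun r hr => ?_⟩
      rw [hMcol k]
      show (M * o) r k = 0
      rw [hcomm, Matrix.mul_apply]
      apply Finset.sum_eq_zero
      intro t _
      rw [Matrix.conjTranspose_apply, hsupp t r (Or.inr hr), star_zero, zero_mul]
    obtain ⟨i₀, hi₀A, hi₀S⟩ := Set.exists_of_ssubset hSA
    obtain ⟨j, _, hj⟩ := hext i₀ hi₀A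
    have key : ∃ v ∈ Kspace M A, v i₀ ≠ 0 ∨ M.mulVec v i₀ ≠ 0 := by
      rcases hj with hij | hji
      · exact ⟨_, hcolK j, Or.inl hij⟩
      · have hu : (fun r => o r i₀) ≠ 0 := by
          intro h0
          exact hji (by simpa using congrFun h0 j)
        have hMu := hinj _ hu
        rw [hMcol i₀] at hMu
        obtain ⟨k, hk⟩ : ∃ k, (M * o) k i₀ ≠ 0 := by
          by_contra hc
          push_neg at hc
          exact hMu (funext fun r => hc r)
        have hHh : (M * o)ᴴ = M * o := by
          rw [Matrix.conjTranspose_mul, hM.1.eq, ← hcomm]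
        have hik : (M * o) i₀ k ≠ 0 := by
          intro h0
          apply hk
          have h1 := congrFun (congrFun hHh k) i₀
          rw [Matrix.conjTranspose_apply] at h1
          rw [← h1, h0, star_zero]
        refine ⟨_, hcolK k, Or.inr ?_⟩
        rw [hMcol k]
        exact hik
    obtain ⟨v, hvK, hv⟩ := key
    have hlt : Kspace M S < Kspace M A := by
      refine lt_of_le_of_ne (Kspace_mono M hSA.subset) fun heq => ?_
      have hvS : v ∈ Kspace M S := heq ▸ hvK
      rw [mem_Kspace] at hvS
      rcases hv with h | h
      · exact h (hvS.1 i₀ hi₀S)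
      · exact h (hvS.2 i₀ hi₀S)
    exact Submodule.finrank_lt_finrank_of_lt hlt
  · intro h
    have hproper : ∀ i ∈ A, ¬ (Kspace M A ≤ Kspace M (A \ {i})) := by
      intro i hi hle
      have hss : A \ {i} ⊂ A := by
        rw [Set.ssubset_iff_subset_ne]
        refine ⟨Set.diff_subset, fun heq => ?_⟩
        have : i ∈ A \ {i} := heq.symm ▸ hi
        exact this.2 rfl
      have hlt := h _ hss
      have heq : Kspace M (A \ {i}) = Kspace M A :=
        le_antisymm (Kspace_mono M Set.diff_subset) hle
      rw [heq] at hlt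
      exact lt_irrefl _ hlt
    set V := Kspace M A with hV
    have hex : ∃ v : V, ∀ i : A, (v : Fin n → ℂ) ∉ Kspace M (A \ {(i : Fin n)}) := by
      by_contra hc
      push_neg at hc
      have hcov : ⋃ i : A, (((Kspace M (A \ {(i : Fin n)})).comap V.subtype : Submodule ℂ V) :
          Set V) = Set.univ := by
        ext v
        simp only [Set.mem_iUnion, Set.mem_univ, iff_true, SetLike.mem_coe,
          Submodule.mem_comap, Submodule.subtype_apply]
        obtain ⟨i, hi⟩ := hc v
        exact ⟨i, hi⟩
      obtain ⟨i, hi⟩ := Subspace.exists_eq_top_of_iUnion_eq_univ hcov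
      apply hproper i i.2
      intro x hx
      have : (⟨x, hx⟩ : V) ∈ (Kspace M (A \ {(i : Fin n)})).comap V.subtype := by
        rw [hi]; trivial
      exact this
    obtain ⟨v, hv⟩ := hex
    have hvA : (∀ j ∉ A, (v : Fin n → ℂ) j = 0) ∧
        ∀ i ∉ A, M.mulVec (v : Fin n → ℂ) i = 0 := mem_Kspace.mp v.2
    have hvi : ∀ i ∈ A, (v : Fin n → ℂ) i ≠ 0 ∨ M.mulVec (v : Fin n → ℂ) i ≠ 0 := by
      intro i hi
      by_contra hcon
      push_neg at hcon
      apply hv ⟨i, hi⟩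
      rw [mem_Kspace]
      constructor
      · intro j hj
        by_cases hji : j = i
        · rw [hji]; exact hcon.1
        · exact hvA.1 j fun hjA => hj ⟨hjA, hji⟩
      · intro j hj
        by_cases hji : j = i
        · rw [hji]; exact hcon.2
        · exact hvA.2 j fun hjA => hj ⟨hjA, hji⟩
    have hvne : (v : Fin n → ℂ) ≠ 0 := by
      obtain ⟨i₀, hi₀⟩ := hA
      intro h0
      rcases hvi i₀ hi₀ with h' | h'
      · exact h' (by rw [h0]; rfl)
      · exact h' (by rw [h0, Matrix.mulVec_zero]; rfl)
    set w : Fin n → ℂ := M.mulVec (v : Fin n → ℂ) with hwdef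
    have hwne : w ≠ 0 := hinj _ hvne
    obtain ⟨jv, hjv⟩ : ∃ j, (v : Fin n → ℂ) j ≠ 0 := Function.ne_iff.mp hvne
    obtain ⟨jw, hjw⟩ : ∃ j, w j ≠ 0 := Function.ne_iff.mp hwne
    have hjvA : jv ∈ A := by by_contra hc; exact hjv (hvA.1 jv hc)
    have hjwA : jw ∈ A := by by_contra hc; exact hjw (hvA.2 jw hc)
    have hwsum : ∀ x, w x = ∑ k, M x k * (v : Fin n → ℂ) k := by
      intro x; simp [hwdef, Matrix.mulVec, dotProduct]
    have hws : ∀ x, star (w x) = ∑ k, star ((v : Fin n → ℂ) k) * M k x := by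
      intro x
      rw [hwsum x, star_sum]
      refine Finset.sum_congr rfl fun k _ => ?_
      rw [star_mul', hent x k, mul_comm]
    refine ⟨Matrix.of fun i j => (v : Fin n → ℂ) i * star (w j), ?_, ?_, ?_⟩
    · rintro i j (hi | hj)
      · simp [hvA.1 i hi]
      · simp [hvA.2 j hj, ← hwdef]
    · ext i j
      rw [Matrix.mul_apply, Matrix.mul_apply]
      simp only [Matrix.conjTranspose_apply, Matrix.of_apply]
      calc ∑ k, M i k * ((v : Fin n → ℂ) k * star (w j))
          = (∑ k, M i k * (v : Fin n → ℂ) k) * star (w j) := by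
            rw [Finset.sum_mul]
            exact Finset.sum_congr rfl fun k _ => (mul_assoc _ _ _).symm
        _ = w i * star (w j) := by rw [← hwsum i]
        _ = ∑ k, star ((v : Fin n → ℂ) k * star (w i)) * M k j := by
            rw [hws j, Finset.mul_sum]
            refine Finset.sum_congr rfl fun k _ => ?_
            rw [star_mul', star_star]
            ring
    · intro i hi
      rcases hvi i hi with h' | h'
      · refine ⟨jw, hjwA, Or.inl ?_⟩
        show (v : Fin n → ℂ) i * star (w jw) ≠ 0
        exact mul_ne_zero h' (star_ne_zero.mpr hjw)
      · refine ⟨jv, hjvA, Or.inr ?_⟩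
        show (v : Fin n → ℂ) jv * star (w i) ≠ 0
        exact mul_ne_zero hjv (star_ne_zero.mpr h')
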